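/- arXiv:1202.3311 — 3 statements merged into one kernel-verified Lean document; each statement's English description precedes it below -/
import Mathlib

section
/- Let q ≥ 2 be an integer, let 𝒯 = {X_1 → expr_1, …, X_n → expr_n} be an SLP representing string T, and let P be any string of length q. Then |Occ(T,P)| = Σ_{i : X_i has a nonterminal rule} vOcc(X_i) · |Occ(t_i, P)|. -/
/-- A straight line program over alphabet `α`: variables are `Fin n` (variable
`X_i` of the paper corresponds to index `i-1`), each with either a terminal
rule (a single character) or a nonterminal rule `X_i → X_j X_k` with `j,k < i`. -/
structure SLP (α : Type) where
  n : ℕ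
  npos : 0 < n
  rule : Fin n → α ⊕ (Fin n × Fin n)
  wf : ∀ i jk, rule i = Sum.inr jk → jk.1 < i ∧ jk.2 < i

namespace SLP

variable {α : Type}

/-- the string `val(X_i)` derived by a variable -/
def val (S : SLP α) (i : Fin S.n) : List α :=
  match h : S.rule i with
  | Sum.inl a => [a]
  | Sum.inr jk =>
    have _h1 := (S.wf i jk h).1
    have _h2 := (S.wf i jk h).2
    S.val jk.1 ++ S.val jk.2
termination_by i.val

/-- the last variable `X_n` -/
def lastIdx (S : SLP α) : Fin S.n := ⟨S.n - 1, Nat.sub_lt S.npos Nat.one_pos⟩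

/-- the string `T` represented by the SLP -/
def text (S : SLP α) : List α := S.val S.lastIdx

/-- `T([i:j])`: the (1-based, inclusive) substring of a string -/
def substr (T : List α) (i j : ℕ) : List α := (T.drop (i - 1)).take (j + 1 - i)

/-- `pre(T,q)` -/
def spre (T : List α) (q : ℕ) : List α := T.take q

/-- `suf(T,q)` -/
def ssuf (T : List α) (q : ℕ) : List α := T.drop (T.length - q)

/-- `pre([b:e],q)` for intervals of positions -/
def ipre (b e q : ℕ) : Finset ℕ := Finset.Icc b (min (b + q - 1) e)

/-- `suf([b:e],q)` for intervals of positions -/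
def isuf (b e q : ℕ) : Finset ℕ := Finset.Icc (max b (e + 1 - q)) e

/-- `Occ(T,P)`: the set of (1-based) occurrences of `P` in `T` -/
def Occ [DecidableEq α] (T P : List α) : Finset ℕ :=
  (Finset.Icc 1 T.length).filter fun k => substr T k (k + P.length - 1) = P

/-- the multiset of labels of the nodes of the derivation tree rooted at
a node labeled `X_i` -/
def occsFrom (S : SLP α) (i : Fin S.n) : Multiset (Fin S.n) :=
  match h : S.rule i with
  | Sum.inl _ => {i}
  | Sum.inr jk =>
    have _h1 := (S.wf i jk h).1
    have _h2 := (S.wf i jk h).2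
    i ::ₘ (S.occsFrom jk.1 + S.occsFrom jk.2)
termination_by i.val

/-- `vOcc(X_i)`: the number of nodes of the derivation tree labeled `X_i` -/
def vOcc (S : SLP α) (i : Fin S.n) : ℕ := (S.occsFrom S.lastIdx).count i

/-- the string `t_i = suf(val(X_{ℓ(i)}),q-1) pre(val(X_{r(i)}),q-1)`
(and `[]` for a terminal rule) -/
def tstr (S : SLP α) (q : ℕ) (i : Fin S.n) : List α :=
  match S.rule i with
  | Sum.inl _ => []
  | Sum.inr jk => ssuf (S.val jk.1) (q - 1) ++ spre (S.val jk.2) (q - 1)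

/-- `label(X_i) = t_i([q:|t_i|])` -/
def labelStr (S : SLP α) (q : ℕ) (i : Fin S.n) : List α := (S.tstr q i).drop (q - 1)

/-- Nodes of the derivation tree are represented by the path from the root
(`false` = go to left child, `true` = go to right child).  `descend i p`
returns the label of the node reached from a node labeled `X_i` by path `p`. -/
def descend (S : SLP α) : Fin S.n → List Bool → Option (Fin S.n)
  | i, [] => some i
  | i, b :: p =>
    match S.rule i with
    | Sum.inl _ => none
    | Sum.inr jk => S.descend (if b then jk.2 else jk.1) p

/-- the label of the node of the derivation tree reached by path `p` from the root -/
def nodeVar (S : SLP α) (p : List Bool) : Option (Fin S.n) := S.descend S.lastIdx p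

/-- `p` is a valid node of the derivation tree -/
def IsNode (S : SLP α) (p : List Bool) : Prop := (S.nodeVar p).isSome

/-- the 0-based offset in `val(X_i)` of the part derived below path `p` -/
def offsetFrom (S : SLP α) : Fin S.n → List Bool → ℕ
  | _, [] => 0
  | i, b :: p =>
    match S.rule i with
    | Sum.inl _ => 0
    | Sum.inr jk =>
      if b then (S.val jk.1).length + S.offsetFrom jk.2 p
      else S.offsetFrom jk.1 p

/-- the 0-based offset in `T` of the interval derived by node `p` -/
def offset (S : SLP α) (p : List Bool) : ℕ := S.offsetFrom S.lastIdx p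

/-- `itv(v)`: the (1-based) interval of positions of `T` derived by node `p` -/
def itv (S : SLP α) (p : List Bool) : Finset ℕ :=
  match S.nodeVar p with
  | some i => Finset.Icc (S.offset p + 1) (S.offset p + (S.val i).length)
  | none => ∅

/-- `p = ξ(b,e)`: `p` is the deepest node whose interval contains `[b:e]`,
i.e. `itv(p) ⊇ [b:e]` and no proper descendant of `p` satisfies this. -/
def Stabs (S : SLP α) (p : List Bool) (b e : ℕ) : Prop :=
  S.IsNode p ∧ Finset.Icc b e ⊆ S.itv p ∧
  ∀ p' : List Bool, p <+: p' → p ≠ p' → S.IsNode p' → ¬ Finset.Icc b e ⊆ S.itv p'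

/-- `X_j` is a right `q`-gram neighbor of `X_i` -/
def RightNbr (S : SLP α) (q : ℕ) (i j : Fin S.n) : Prop :=
  i ≠ j ∧ ∃ u p p', 1 ≤ u ∧ u + q ≤ S.text.length ∧
    S.Stabs p u (u + q - 1) ∧ S.nodeVar p = some i ∧
    S.Stabs p' (u + 1) (u + q) ∧ S.nodeVar p' = some j

/-- `lm_q(X_i)`: the last variable of length `≥ q` on the sequence `i, ℓ(i), ℓ(ℓ(i)), …`
(meaningful when `|val(X_i)| ≥ q`) -/
def lm (S : SLP α) (q : ℕ) (i : Fin S.n) : Fin S.n :=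
  match h : S.rule i with
  | Sum.inl _ => i
  | Sum.inr jk =>
    have := (S.wf i jk h).1
    if (S.val jk.1).length < q then i else S.lm q jk.1
termination_by i.val

/-- `rm_q(X_i)`: the last variable of length `≥ q` on the sequence `i, r(i), r(r(i)), …` -/
def rm (S : SLP α) (q : ℕ) (i : Fin S.n) : Fin S.n :=
  match h : S.rule i with
  | Sum.inl _ => i
  | Sum.inr jk =>
    have := (S.wf i jk h).2
    if (S.val jk.2).length < q then i else S.rm q jk.2
termination_by i.val

/-- `lm_q` returning `null` (`none`) when `|val(X_i)| < q` -/
def lmOpt (S : SLP α) (q : ℕ) (i : Fin S.n) : Option (Fin S.n) :=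
  if (S.val i).length < q then none else some (S.lm q i)

/-- `rm_q` returning `null` (`none`) when `|val(X_i)| < q` -/
def rmOpt (S : SLP α) (q : ℕ) (i : Fin S.n) : Option (Fin S.n) :=
  if (S.val i).length < q then none else some (S.rm q i)

/-- `LSpine S i k`: `k` occurs in the sequence `i, ℓ(i), ℓ(ℓ(i)), …`
(the leftmost path of the derivation subtree rooted at a node labeled `X_i`) -/
inductive LSpine (S : SLP α) : Fin S.n → Fin S.n → Prop
  | refl (i : Fin S.n) : LSpine S i i
  | step {i k : Fin S.n} {jk : Fin S.n × Fin S.n} :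
      S.rule i = Sum.inr jk → LSpine S jk.1 k → LSpine S i k

end SLP
namespace SLPAux
variable {α : Type}

def occSet [DecidableEq α] (T P : List α) : Finset ℕ :=
  (Finset.range T.length).filter fun j => (T.drop j).take P.length = P

lemma mem_occSet [DecidableEq α] {T P : List α} (j : ℕ) (hP : 1 ≤ P.length) :
    j ∈ occSet T P ↔ j + P.length ≤ T.length ∧ (T.drop j).take P.length = P := by
  simp only [occSet, Finset.mem_filter, Finset.mem_range]
  constructor
  · rintro ⟨h1, h2⟩
    refine ⟨?_, h2⟩
    have := congrArg List.length h2
    simp only [List.length_take, List.length_drop] at this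
    omega
  · rintro ⟨h1, h2⟩; exact ⟨by omega, h2⟩

lemma take_left (A B : List α) (q j : ℕ) (h : j + q ≤ A.length) :
    ((A ++ B).drop j).take q = (A.drop j).take q := by
  rw [List.drop_append, List.take_append]
  have h1 : j - A.length = 0 := by omega
  have h2 : q - (A.drop j).length = 0 := by
    simp only [List.length_drop]; omega
  rw [h1, h2]
  simp

lemma drop_right (A B : List α) (j : ℕ) (h : A.length ≤ j) :
    (A ++ B).drop j = B.drop (j - A.length) := by
  rw [List.drop_append, List.drop_eq_nil_of_le h, List.nil_append]

lemma take_drop_cross (A B : List α) (q j : ℕ) (hj : j < A.length)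
    (hj2 : A.length < j + q) :
    ((A ++ B).drop j).take q
      = ((A.drop (A.length - (q - 1)) ++ B.take (q - 1)).drop (j - (A.length - (q - 1)))).take q := by
  set d := A.length - (q - 1) with hd
  have hjd : d ≤ j := by omega
  have L1 : (A ++ B).drop j = A.drop j ++ B := by
    rw [List.drop_append]
    have : j - A.length = 0 := by omega
    rw [this, List.drop_zero]
  have R1 : (A.drop d ++ B.take (q - 1)).drop (j - d) = A.drop j ++ B.take (q - 1) := by
    rw [List.drop_append, List.drop_drop]
    have h1 : d + (j - d) = j := by omega
    rw [h1]
    have : j - d - (A.drop d).length = 0 := by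
      simp only [List.length_drop]; omega
    rw [this, List.drop_zero]
  rw [L1, R1, List.take_append, List.take_append,
    List.take_take]
  congr 1
  have hlen : (A.drop j).length = A.length - j := List.length_drop ..
  have : q - (A.drop j).length ≤ q - 1 := by omega
  rw [min_eq_left this]

lemma occSet_append_card [DecidableEq α] (A B P : List α) (hq2 : 2 ≤ P.length) :
    (occSet (A ++ B) P).card =
      (occSet A P).card
      + (occSet (A.drop (A.length - (P.length - 1)) ++ B.take (P.length - 1)) P).card
      + (occSet B P).card := by
  have hlenAB : (A ++ B).length = A.length + B.length := List.length_append ..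
  have ht : (A.drop (A.length - (P.length - 1)) ++ B.take (P.length - 1)).length
      = (A.length - (A.length - (P.length - 1))) + min (P.length - 1) B.length := by
    simp [List.length_drop, List.length_take]
  -- part A
  have hA : (occSet (A ++ B) P).filter (fun j => j + P.length ≤ A.length) = occSet A P := by
    ext j
    simp only [Finset.mem_filter, mem_occSet j (by omega : 1 ≤ P.length)]
    constructor
    · rintro ⟨⟨hle, heq⟩, hja⟩
      rw [take_left A B P.length j hja] at heq
      exact ⟨hja, heq⟩
    · rintro ⟨hle, heq⟩
      rw [← take_left A B P.length j hle] at heq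
      exact ⟨⟨by omega, heq⟩, hle⟩
  -- part B
  have hB : ((occSet (A ++ B) P).filter (fun j => A.length ≤ j)).card
      = (occSet B P).card := by
    apply Finset.card_nbij' (fun j => j - A.length) (fun m => m + A.length)
    · intro j hj
      simp only [Finset.mem_coe, Finset.mem_filter, mem_occSet _ (by omega : 1 ≤ P.length)] at hj
      obtain ⟨⟨hle, heq⟩, hja⟩ := hj
      rw [drop_right A B j hja] at heq
      rw [Finset.mem_coe, mem_occSet _ (by omega : 1 ≤ P.length)]
      exact ⟨by dsimp only; omega, heq⟩
    · intro m hm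
      rw [Finset.mem_coe, mem_occSet _ (by omega : 1 ≤ P.length)] at hm
      obtain ⟨hle, heq⟩ := hm
      simp only [Finset.mem_coe, Finset.mem_filter, mem_occSet _ (by omega : 1 ≤ P.length)]
      refine ⟨⟨by omega, ?_⟩, by omega⟩
      rw [drop_right A B (m + A.length) (by omega)]
      have h1 : m + A.length - A.length = m := by omega
      rw [h1]; exact heq
    · intro j hj
      simp only [Finset.mem_coe, Finset.mem_filter] at hj
      dsimp only; omega
    · intro m _; dsimp only; omega
  -- crossing part
  have hT : ((occSet (A ++ B) P).filter
        (fun j => ¬(j + P.length ≤ A.length) ∧ ¬(A.length ≤ j))).card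
      = (occSet (A.drop (A.length - (P.length - 1)) ++ B.take (P.length - 1)) P).card := by
    apply Finset.card_nbij' (fun j => j - (A.length - (P.length - 1)))
      (fun m => m + (A.length - (P.length - 1)))
    · intro j hj
      simp only [Finset.mem_coe, Finset.mem_filter, mem_occSet _ (by omega : 1 ≤ P.length)] at hj
      obtain ⟨⟨hle, heq⟩, hja1, hja2⟩ := hj
      rw [hlenAB] at hle
      rw [take_drop_cross A B P.length j (by omega) (by omega)] at heq
      rw [Finset.mem_coe, mem_occSet _ (by omega : 1 ≤ P.length)]
      refine ⟨?_, heq⟩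
      rw [ht]
      dsimp only; omega
    · intro m hm
      rw [Finset.mem_coe, mem_occSet _ (by omega : 1 ≤ P.length)] at hm
      obtain ⟨hle, heq⟩ := hm
      rw [ht] at hle
      simp only [Finset.mem_coe, Finset.mem_filter, mem_occSet _ (by omega : 1 ≤ P.length)]
      have hj1 : m + (A.length - (P.length - 1)) < A.length := by omega
      have hj2 : A.length < m + (A.length - (P.length - 1)) + P.length := by omega
      refine ⟨⟨by rw [hlenAB]; omega, ?_⟩, by omega, by omega⟩
      rw [take_drop_cross A B P.length (m + (A.length - (P.length - 1))) hj1 hj2]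
      have h1 : m + (A.length - (P.length - 1)) - (A.length - (P.length - 1)) = m := by omega
      rw [h1]; exact heq
    · intro j hj
      simp only [Finset.mem_coe, Finset.mem_filter] at hj
      dsimp only; omega
    · intro m _; dsimp only; omega
  -- partition
  have e1 := Finset.card_filter_add_card_filter_not
    (s := occSet (A ++ B) P) (p := fun j => j + P.length ≤ A.length)
  have e2 := Finset.card_filter_add_card_filter_not
    (s := (occSet (A ++ B) P).filter (fun j => ¬(j + P.length ≤ A.length)))
    (p := fun j => A.length ≤ j)
  rw [Finset.filter_filter, Finset.filter_filter] at e2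
  have e3 : (occSet (A ++ B) P).filter (fun a => ¬(a + P.length ≤ A.length) ∧ A.length ≤ a)
      = (occSet (A ++ B) P).filter (fun j => A.length ≤ j) := by
    apply Finset.filter_congr
    intro x _
    exact ⟨fun h => h.2, fun h => ⟨by omega, h⟩⟩
  rw [e3] at e2
  have hAc := congrArg Finset.card hA
  omega

lemma occSet_singleton [DecidableEq α] (a : α) (P : List α) (h : 2 ≤ P.length) :
    occSet [a] P = ∅ := by
  ext j
  simp only [occSet, Finset.mem_filter, Finset.mem_range, List.length_singleton,
    Finset.notMem_empty, iff_false, not_and]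
  intro hj
  have hj0 : j = 0 := by omega
  subst hj0
  rw [List.drop_zero, List.take_of_length_le (by simp; omega)]
  intro he
  have := congrArg List.length he
  simp only [List.length_singleton] at this
  omega

end SLPAux

namespace SLPAux
open SLP
variable {α : Type}

lemma Occ_card_eq [DecidableEq α] (T P : List α) (hP : 1 ≤ P.length) :
    (SLP.Occ T P).card = (occSet T P).card := by
  apply Finset.card_nbij' (fun k => k - 1) (fun j => j + 1)
  · intro k hk
    simp only [Finset.mem_coe, SLP.Occ, Finset.mem_filter, Finset.mem_Icc] at hk; simp only [SLP.substr] at hk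
    obtain ⟨⟨hk1, hk2⟩, hk3⟩ := hk
    have he : k + P.length - 1 + 1 - k = P.length := by omega
    rw [he] at hk3
    simp only [Finset.mem_coe, occSet, Finset.mem_filter, Finset.mem_range]
    exact ⟨by omega, hk3⟩
  · intro j hj
    simp only [Finset.mem_coe, occSet, Finset.mem_filter, Finset.mem_range] at hj
    obtain ⟨hj1, hj2⟩ := hj
    simp only [Finset.mem_coe, SLP.Occ, Finset.mem_filter, Finset.mem_Icc]; simp only [SLP.substr]
    have he : j + 1 + P.length - 1 + 1 - (j + 1) = P.length := by omega
    rw [he]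
    have h0 : j + 1 - 1 = j := by omega
    rw [h0]
    exact ⟨⟨by omega, by omega⟩, hj2⟩
  · intro k hk
    simp only [Finset.mem_coe, SLP.Occ, Finset.mem_filter, Finset.mem_Icc] at hk
    dsimp only; omega
  · intro j _; dsimp only; omega

lemma val_inl {S : SLP α} {i : Fin S.n} {a : α} (h : S.rule i = Sum.inl a) :
    S.val i = [a] := by
  rw [SLP.val]; split <;> simp_all

lemma val_inr {S : SLP α} {i : Fin S.n} {jk : Fin S.n × Fin S.n}
    (h : S.rule i = Sum.inr jk) : S.val i = S.val jk.1 ++ S.val jk.2 := by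
  rw [SLP.val]; split <;> simp_all

lemma occsFrom_inl {S : SLP α} {i : Fin S.n} {a : α} (h : S.rule i = Sum.inl a) :
    S.occsFrom i = {i} := by
  rw [SLP.occsFrom]; split <;> simp_all

lemma occsFrom_inr {S : SLP α} {i : Fin S.n} {jk : Fin S.n × Fin S.n}
    (h : S.rule i = Sum.inr jk) :
    S.occsFrom i = i ::ₘ (S.occsFrom jk.1 + S.occsFrom jk.2) := by
  rw [SLP.occsFrom]; split <;> simp_all

lemma tstr_inr {S : SLP α} {i : Fin S.n} {jk : Fin S.n × Fin S.n} (q : ℕ)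
    (h : S.rule i = Sum.inr jk) :
    S.tstr q i = SLP.ssuf (S.val jk.1) (q - 1) ++ SLP.spre (S.val jk.2) (q - 1) := by
  unfold SLP.tstr; rw [h]

def fC [DecidableEq α] (S : SLP α) (q : ℕ) (P : List α) (i : Fin S.n) : ℕ :=
  if (S.rule i).isRight then (SLP.Occ (S.tstr q i) P).card else 0

lemma key [DecidableEq α] (S : SLP α) (q : ℕ) (hq : 2 ≤ q) (P : List α)
    (hP : P.length = q) :
    ∀ (m : ℕ) (i : Fin S.n), i.val < m →
      (occSet (S.val i) P).card = ((S.occsFrom i).map (fC S q P)).sum := by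
  intro m
  induction m with
  | zero => intro i h; exact absurd h (Nat.not_lt_zero _)
  | succ m ih =>
    intro i hi
    cases h : S.rule i with
    | inl a =>
      rw [val_inl h, occsFrom_inl h, occSet_singleton a P (by omega)]
      simp [fC, h]
    | inr jk =>
      have h1 := (S.wf i jk h).1
      have h2 := (S.wf i jk h).2
      rw [val_inr h, occsFrom_inr h,
        occSet_append_card _ _ _ (by omega),
        ih jk.1 (by omega), ih jk.2 (by omega)]
      simp only [Multiset.map_cons, Multiset.map_add, Multiset.sum_cons, Multiset.sum_add]
      have hc : fC S q P i
          = (occSet ((S.val jk.1).drop ((S.val jk.1).length - (P.length - 1))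
              ++ (S.val jk.2).take (P.length - 1)) P).card := by
        simp only [fC, h, Sum.isRight_inr, if_true]
        rw [Occ_card_eq _ _ (by omega), tstr_inr q h]
        simp only [SLP.ssuf, SLP.spre, hP]
      omega

end SLPAux

/-- Lemma 2 of the paper: for an SLP `𝒯` representing `T`,
`q ≥ 2` and any `q`-gram `P`,
`|Occ(T,P)| = Σ_{i nonterminal} vOcc(X_i) · |Occ(t_i,P)|`. -/
theorem stmt0 {α : Type} [DecidableEq α] (q : ℕ) (hq : 2 ≤ q) (S : SLP α)
    (P : List α) (hP : P.length = q) :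
    (SLP.Occ S.text P).card =
      ∑ i ∈ Finset.univ.filter (fun i : Fin S.n => (S.rule i).isRight = true),
        S.vOcc i * (SLP.Occ (S.tstr q i) P).card := by
  classical
  have h1 : (SLP.Occ S.text P).card
      = ((S.occsFrom S.lastIdx).map (SLPAux.fC S q P)).sum := by
    rw [SLPAux.Occ_card_eq _ _ (by omega)]
    exact SLPAux.key S q hq P hP S.n S.lastIdx S.lastIdx.isLt
  rw [h1, Finset.sum_multiset_map_count]
  have h2 : ∑ m ∈ (S.occsFrom S.lastIdx).toFinset,
        (S.occsFrom S.lastIdx).count m • SLPAux.fC S q P m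
      = ∑ m : Fin S.n, (S.occsFrom S.lastIdx).count m * SLPAux.fC S q P m := by
    simp only [smul_eq_mul]
    apply Finset.sum_subset (Finset.subset_univ _)
    intro x _ hx
    rw [Multiset.count_eq_zero.2 (by simpa using hx), zero_mul]
  rw [h2, Finset.sum_filter]
  apply Finset.sum_congr rfl
  intro i _
  by_cases hR : (S.rule i).isRight = true <;>
    simp [SLPAux.fC, SLP.vOcc, hR, mul_comm]
end

section
/- Let q ≥ 2, let 𝒯 be an SLP representing T, let v be a node of the derivation tree labeled by a variable with a nonterminal rule, and let [s_v:f_v] = suf(itv(ℓ(v)), q-1) ∪ pre(itv(r(v)), q-1) (this union of two adjacent intervals is an interval). Then for any position u with 1 ≤ u and u + q - 1 ≤ |T|, the node ξ(u, u+q-1) equals v if and only if [u : u+q-1] ⊆ [s_v : f_v]. -/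
section Aux
variable {α : Type}

theorem SLP.val_inr (S : SLP α) {i : Fin S.n} {jk : Fin S.n × Fin S.n}
    (h : S.rule i = Sum.inr jk) : S.val i = S.val jk.1 ++ S.val jk.2 := by
  rw [val]
  split
  next a ha => rw [ha] at h; cases h
  next jk' h' => rw [h'] at h; injection h with h; subst h; rfl

theorem SLP.length_val_pos (S : SLP α) (i : Fin S.n) : 0 < (S.val i).length := by
  have H : ∀ m : ℕ, ∀ i : Fin S.n, i.val < m → 0 < (S.val i).length := by
    intro m
    induction m with
    | zero => intro i hi; omega
    | succ m ih =>
      intro i hi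
      rw [val]
      split
      · simp
      next jk h =>
        have hw := (S.wf i jk h).1
        have := ih jk.1 (by omega)
        simp only [List.length_append]
        omega
  exact H (i.val + 1) i (by omega)

theorem SLP.descend_append (S : SLP α) (p1 p2 : List Bool) : ∀ i : Fin S.n,
    S.descend i (p1 ++ p2) = (S.descend i p1).bind (fun j => S.descend j p2) := by
  induction p1 with
  | nil => intro i; simp [descend]
  | cons b p ih =>
    intro i
    simp only [List.cons_append, descend]
    split
    · rfl
    · exact ih _

theorem SLP.offsetFrom_append (S : SLP α) (p1 p2 : List Bool) : ∀ (i j : Fin S.n),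
    S.descend i p1 = some j →
    S.offsetFrom i (p1 ++ p2) = S.offsetFrom i p1 + S.offsetFrom j p2 := by
  induction p1 with
  | nil =>
    intro i j h
    simp only [descend, Option.some.injEq] at h
    subst h
    simp [offsetFrom]
  | cons b p ih =>
    intro i j h
    simp only [descend] at h
    simp only [List.cons_append, offsetFrom]
    cases hres : S.rule i with
    | inl a => simp only [hres] at h; cases h
    | inr jk =>
      simp only [hres] at h ⊢
      cases b with
      | false => simpa using ih _ _ (by simpa using h)
      | true =>
        simp only [if_true, List.append_eq] at h ⊢
        rw [ih _ _ h]
        omega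

theorem SLP.offsetFrom_add_le (S : SLP α) (p : List Bool) : ∀ (i j : Fin S.n),
    S.descend i p = some j →
    S.offsetFrom i p + (S.val j).length ≤ (S.val i).length := by
  induction p with
  | nil =>
    intro i j h
    simp only [descend, Option.some.injEq] at h
    subst h
    simp [offsetFrom]
  | cons b t ih =>
    intro i j h
    simp only [descend] at h
    simp only [offsetFrom]
    cases hres : S.rule i with
    | inl a => simp only [hres] at h; cases h
    | inr jk =>
      simp only [hres] at h ⊢
      rw [S.val_inr hres, List.length_append]
      cases b with
      | false =>
        have := ih _ _ (by simpa using h)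
        simp only [Bool.false_eq_true, if_false]
        omega
      | true =>
        simp only [if_true] at h ⊢
        have := ih _ _ h
        omega

theorem SLP.itv_eq (S : SLP α) {p : List Bool} {i : Fin S.n} (h : S.nodeVar p = some i) :
    S.itv p = Finset.Icc (S.offset p + 1) (S.offset p + (S.val i).length) := by
  simp [itv, h]

end Aux
/-- for a node `p` of the derivation tree labeled by a variable
`X_i` with a nonterminal rule, and `[s:f] = suf(itv(ℓ(v)),q-1) ∪ pre(itv(r(v)),q-1)`,
a position `u` (with `[u:u+q-1]` inside `T`) satisfies `ξ(u,u+q-1) = v` iff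
`[u:u+q-1] ⊆ [s:f]`. -/
theorem stmt1 {α : Type} (q : ℕ) (hq : 2 ≤ q) (S : SLP α)
    (p : List Bool) (i : Fin S.n) (jk : Fin S.n × Fin S.n)
    (hp : S.nodeVar p = some i) (hr : S.rule i = Sum.inr jk)
    (s f : ℕ)
    (hsf : Finset.Icc s f =
      SLP.isuf (S.offset p + 1) (S.offset p + (S.val jk.1).length) (q - 1) ∪
      SLP.ipre (S.offset p + (S.val jk.1).length + 1)
        (S.offset p + (S.val i).length) (q - 1))
    (u : ℕ) (hu1 : 1 ≤ u) (hu2 : u + q - 1 ≤ S.text.length) :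
    S.Stabs p u (u + q - 1) ↔ Finset.Icc u (u + q - 1) ⊆ Finset.Icc s f := by
  have hp' : S.descend S.lastIdx p = some i := hp
  have hL : 0 < (S.val jk.1).length := S.length_val_pos jk.1
  have hR : 0 < (S.val jk.2).length := S.length_val_pos jk.2
  have hi : (S.val i).length = (S.val jk.1).length + (S.val jk.2).length := by
    rw [S.val_inr hr, List.length_append]
  have hq1 : u ≤ u + q - 1 := by omega
  set o := S.offset p with ho
  set L := (S.val jk.1).length with hLdef
  set R := (S.val jk.2).length with hRdef
  -- children
  have hnf : S.nodeVar (p ++ [false]) = some jk.1 := by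
    show S.descend S.lastIdx (p ++ [false]) = some jk.1
    rw [S.descend_append, hp']
    simp [SLP.descend, hr]
  have hnt : S.nodeVar (p ++ [true]) = some jk.2 := by
    show S.descend S.lastIdx (p ++ [true]) = some jk.2
    rw [S.descend_append, hp']
    simp [SLP.descend, hr]
  have hof : S.offset (p ++ [false]) = o := by
    have h1 : S.offset (p ++ [false]) = S.offset p + S.offsetFrom i [false] :=
      S.offsetFrom_append p [false] S.lastIdx i hp'
    rw [h1]
    simp [SLP.offsetFrom, hr, ho]
  have hot : S.offset (p ++ [true]) = o + L := by
    have h1 : S.offset (p ++ [true]) = S.offset p + S.offsetFrom i [true] :=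
      S.offsetFrom_append p [true] S.lastIdx i hp'
    rw [h1]
    simp [SLP.offsetFrom, hr, ho, hLdef]
  -- membership in [s:f]
  have hmem : ∀ x, x ∈ Finset.Icc s f ↔
      (max (o + 1) (o + L + 1 - (q - 1)) ≤ x ∧ x ≤ o + L) ∨
      (o + L + 1 ≤ x ∧ x ≤ min (o + L + 1 + (q - 1) - 1) (o + (L + R))) := by
    intro x
    rw [hsf]
    simp only [SLP.isuf, SLP.ipre, Finset.mem_union, Finset.mem_Icc, hi]
  have hRHS : (Finset.Icc u (u + q - 1) ⊆ Finset.Icc s f) ↔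
      (o + 1 ≤ u ∧ u ≤ o + L ∧ o + L + 1 ≤ u + q - 1 ∧ u + q - 1 ≤ o + L + R) := by
    constructor
    · intro h
      have h1 := (hmem u).mp (h (Finset.mem_Icc.mpr ⟨le_refl u, hq1⟩))
      have h2 := (hmem (u + q - 1)).mp (h (Finset.mem_Icc.mpr ⟨hq1, le_refl _⟩))
      omega
    · intro hC x hx
      rw [Finset.mem_Icc] at hx
      rw [hmem x]
      omega
  rw [hRHS]
  constructor
  · rintro ⟨hnode, hsub, hmax⟩
    have hu_in := hsub (Finset.mem_Icc.mpr ⟨le_refl u, hq1⟩)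
    have he_in := hsub (Finset.mem_Icc.mpr ⟨hq1, le_refl _⟩)
    rw [S.itv_eq hp, Finset.mem_Icc] at hu_in he_in
    have hne1 : p ≠ p ++ [false] := by
      intro h; simpa using congrArg List.length h
    have hne2 : p ≠ p ++ [true] := by
      intro h; simpa using congrArg List.length h
    have hnsub1 := hmax (p ++ [false]) (List.prefix_append _ _) hne1
      (by simp [SLP.IsNode, hnf])
    have hnsub2 := hmax (p ++ [true]) (List.prefix_append _ _) hne2
      (by simp [SLP.IsNode, hnt])
    rw [S.itv_eq hnf, hof, Finset.not_subset] at hnsub1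
    rw [S.itv_eq hnt, hot, Finset.not_subset] at hnsub2
    obtain ⟨x1, hx1, hx1n⟩ := hnsub1
    obtain ⟨x2, hx2, hx2n⟩ := hnsub2
    rw [Finset.mem_Icc] at hx1 hx2
    rw [Finset.mem_Icc] at hx1n hx2n
    rw [hi] at he_in
    omega
  · intro hC
    refine ⟨by simp [SLP.IsNode, hp], ?_, ?_⟩
    · intro x hx
      rw [Finset.mem_Icc] at hx
      rw [S.itv_eq hp, Finset.mem_Icc, hi]
      omega
    · intro p' hpre hne hnode' hsub'
      obtain ⟨t, rfl⟩ := hpre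
      cases t with
      | nil => exact hne (by simp)
      | cons b rest =>
        rw [SLP.IsNode] at hnode'
        obtain ⟨m, hm⟩ := Option.isSome_iff_exists.mp hnode'
        have hm' : S.descend S.lastIdx (p ++ b :: rest) = some m := hm
        have hdm : S.descend i (b :: rest) = some m := by
          rw [S.descend_append, hp'] at hm'
          exact hm'
        have hoff : S.offset (p ++ b :: rest) = o + S.offsetFrom i (b :: rest) :=
          S.offsetFrom_append p (b :: rest) S.lastIdx i hp'
        have hdm2 : S.descend (if b then jk.2 else jk.1) rest = some m := by
          simpa [SLP.descend, hr] using hdm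
        have hofc : S.offsetFrom i (b :: rest) =
            if b then L + S.offsetFrom jk.2 rest else S.offsetFrom jk.1 rest := by
          simp [SLP.offsetFrom, hr, hLdef]
        have hu_in := hsub' (Finset.mem_Icc.mpr ⟨le_refl u, hq1⟩)
        have he_in := hsub' (Finset.mem_Icc.mpr ⟨hq1, le_refl _⟩)
        rw [S.itv_eq hm, Finset.mem_Icc, hoff, hofc] at hu_in he_in
        cases b with
        | false =>
          simp only [Bool.false_eq_true, if_false] at hdm2 hu_in he_in
          have hkey := S.offsetFrom_add_le rest jk.1 m hdm2
          omega
        | true =>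
          simp only [if_true] at hdm2 hu_in he_in
          have hkey := S.offsetFrom_add_le rest jk.2 m hdm2
          omega
end

section
/- Let q ≥ 2, let 𝒯 be an SLP representing T, and suppose X_j is a right q-gram neighbor of X_i. If |val(X_{r(i)})| ≥ q, then j = lm_q(X_{r(i)}), i.e., X_j is the label of the deepest node on the leftmost path of the derivation subtree rooted at a node labeled X_{r(i)} whose derived string has length at least q; in particular, the right q-gram neighbor of X_i is uniquely determined, and moreover |val(X_{ℓ(j)})| < q. -/
namespace SLP

variable {α : Type}

variable {S : SLP α}

lemma val_eq_inl {i : Fin S.n} {a : α} (h : S.rule i = Sum.inl a) : S.val i = [a] := by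
  rw [val]; split <;> simp_all

lemma val_eq_inr {i : Fin S.n} {jk : Fin S.n × Fin S.n} (h : S.rule i = Sum.inr jk) :
    S.val i = S.val jk.1 ++ S.val jk.2 := by
  rw [val]; split <;> simp_all

lemma val_length_pos (i : Fin S.n) : 0 < (S.val i).length := by
  cases h : S.rule i with
  | inl a => simp [val_eq_inl h]
  | inr jk =>
    have := (S.wf i jk h).1
    have := val_length_pos jk.1
    simp [val_eq_inr h]; omega
termination_by i.val

lemma descend_cons_inl {i : Fin S.n} {a : α} (h : S.rule i = Sum.inl a) (b : Bool) (p : List Bool) :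
    S.descend i (b :: p) = none := by
  simp [descend, h]

lemma descend_cons_inr {i : Fin S.n} {jk : Fin S.n × Fin S.n} (h : S.rule i = Sum.inr jk)
    (b : Bool) (p : List Bool) :
    S.descend i (b :: p) = S.descend (if b then jk.2 else jk.1) p := by
  simp [descend, h]

lemma offsetFrom_cons_inr {i : Fin S.n} {jk : Fin S.n × Fin S.n} (h : S.rule i = Sum.inr jk)
    (b : Bool) (p : List Bool) :
    S.offsetFrom i (b :: p) =
      (if b then (S.val jk.1).length else 0) + S.offsetFrom (if b then jk.2 else jk.1) p := by
  cases b <;> simp [offsetFrom, h]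

lemma descend_append_s3 (i : Fin S.n) (p p' : List Bool) :
    S.descend i (p ++ p') = (S.descend i p).bind (fun k => S.descend k p') := by
  induction p generalizing i with
  | nil => simp [descend]
  | cons b p ih =>
    cases h : S.rule i with
    | inl a => simp [descend_cons_inl h]
    | inr jk => simp [descend_cons_inr h, ih]

lemma offsetFrom_append_s3 {i k : Fin S.n} (p p' : List Bool) (h : S.descend i p = some k) :
    S.offsetFrom i (p ++ p') = S.offsetFrom i p + S.offsetFrom k p' := by
  induction p generalizing i with
  | nil => simp [descend] at h; subst h; simp [offsetFrom]
  | cons b p ih =>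
    cases hr : S.rule i with
    | inl a => simp [descend_cons_inl hr] at h
    | inr jk =>
      rw [descend_cons_inr hr] at h
      rw [List.cons_append, offsetFrom_cons_inr hr, offsetFrom_cons_inr hr, ih h]
      omega

lemma offsetFrom_add_le_s3 {i k : Fin S.n} (p : List Bool) (h : S.descend i p = some k) :
    S.offsetFrom i p + (S.val k).length ≤ (S.val i).length := by
  induction p generalizing i with
  | nil => simp [descend] at h; subst h; simp [offsetFrom]
  | cons b p ih =>
    cases hr : S.rule i with
    | inl a => simp [descend_cons_inl hr] at h
    | inr jk =>
      rw [descend_cons_inr hr] at h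
      rw [offsetFrom_cons_inr hr, val_eq_inr hr]
      simp only [List.length_append]
      cases b <;> simp only [if_true, if_false, Bool.false_eq_true] at h ⊢ <;>
        [skip; skip] <;> have := ih h <;> omega

lemma prefix_of_common {i : Fin S.n} {p1 p2 : List Bool} {k1 k2 : Fin S.n} {x : ℕ}
    (h1 : S.descend i p1 = some k1) (h2 : S.descend i p2 = some k2)
    (hx1a : S.offsetFrom i p1 + 1 ≤ x) (hx1b : x ≤ S.offsetFrom i p1 + (S.val k1).length)
    (hx2a : S.offsetFrom i p2 + 1 ≤ x) (hx2b : x ≤ S.offsetFrom i p2 + (S.val k2).length) :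
    p1 <+: p2 ∨ p2 <+: p1 := by
  induction p1 generalizing i p2 x with
  | nil => exact Or.inl (List.nil_prefix)
  | cons b1 p1 ih =>
    cases p2 with
    | nil => exact Or.inr (List.nil_prefix)
    | cons b2 p2 =>
      cases hr : S.rule i with
      | inl a => rw [descend_cons_inl hr] at h1; exact absurd h1 (by simp)
      | inr jk =>
        rw [descend_cons_inr hr] at h1 h2
        rw [offsetFrom_cons_inr hr] at hx1a hx1b
        rw [offsetFrom_cons_inr hr] at hx2a hx2b
        have hb1 := offsetFrom_add_le_s3 p1 h1
        have hb2 := offsetFrom_add_le_s3 p2 h2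
        by_cases hb : b1 = b2
        · subst hb
          rcases ih h1 h2 (x := x - (if b1 then (S.val jk.1).length else 0))
            (by omega) (by omega) (by omega) (by omega) with h | h
          · exact Or.inl (List.cons_prefix_cons.mpr ⟨rfl, h⟩)
          · exact Or.inr (List.cons_prefix_cons.mpr ⟨rfl, h⟩)
        · exfalso
          cases b1 <;> cases b2 <;> simp_all <;> omega

lemma nodeVar_prefix {p p' : List Bool} {k' : Fin S.n} (h : p <+: p')
    (h' : S.nodeVar p' = some k') : ∃ k, S.nodeVar p = some k := by
  obtain ⟨t, rfl⟩ := h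
  unfold nodeVar at *
  rw [descend_append_s3] at h'
  cases hk : S.descend S.lastIdx p with
  | none => rw [hk] at h'; simp at h'
  | some k => exact ⟨k, rfl⟩

lemma itv_eq_s3 {p : List Bool} {k : Fin S.n} (h : S.nodeVar p = some k) :
    S.itv p = Finset.Icc (S.offset p + 1) (S.offset p + (S.val k).length) := by
  unfold itv; rw [h]

lemma nodeVar_child {p : List Bool} {k : Fin S.n} {jk : Fin S.n × Fin S.n}
    (hk : S.nodeVar p = some k) (hr : S.rule k = Sum.inr jk) (c : Bool) :
    S.nodeVar (p ++ [c]) = some (if c then jk.2 else jk.1) ∧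
      S.offset (p ++ [c]) = S.offset p + (if c then (S.val jk.1).length else 0) := by
  unfold nodeVar offset at *
  constructor
  · rw [descend_append_s3, hk]
    simp [descend, hr]
  · rw [offsetFrom_append_s3 _ _ hk, offsetFrom_cons_inr hr]
    cases c <;> simp [offsetFrom]

lemma itv_extension_subset {p : List Bool} (t : List Bool) {k2 : Fin S.n}
    (h2 : S.nodeVar (p ++ t) = some k2) (ht : t ≠ []) :
    ∃ c rest, t = c :: rest ∧ S.itv (p ++ t) ⊆ S.itv (p ++ [c]) := by
  cases t with
  | nil => exact absurd rfl ht
  | cons c rest =>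
    refine ⟨c, rest, rfl, ?_⟩
    have hsplit : p ++ c :: rest = (p ++ [c]) ++ rest := by simp
    obtain ⟨k1, hk1⟩ := nodeVar_prefix (p' := p ++ c :: rest)
      ⟨rest, hsplit.symm⟩ h2
    unfold nodeVar at hk1 h2
    have hoff : S.offset (p ++ c :: rest) = S.offset (p ++ [c]) + S.offsetFrom k1 rest := by
      unfold offset; rw [hsplit, offsetFrom_append_s3 _ _ hk1]
    have hdes : S.descend k1 rest = some k2 := by
      rw [hsplit, descend_append_s3, hk1] at h2; simpa using h2
    have hle := offsetFrom_add_le_s3 rest hdes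
    rw [itv_eq_s3 (p := p ++ c :: rest) h2, itv_eq_s3 (p := p ++ [c]) hk1]
    intro x hx
    simp only [Finset.mem_Icc] at hx ⊢
    omega

lemma stabs_unique {p1 p2 : List Bool} {b e : ℕ} (hbe : b ≤ e)
    (h1 : S.Stabs p1 b e) (h2 : S.Stabs p2 b e) : p1 = p2 := by
  obtain ⟨hn1, hs1, hd1⟩ := h1
  obtain ⟨hn2, hs2, hd2⟩ := h2
  rw [IsNode, Option.isSome_iff_exists] at hn1 hn2
  obtain ⟨k1, hk1⟩ := hn1
  obtain ⟨k2, hk2⟩ := hn2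
  have hb1 := hs1 (Finset.mem_Icc.mpr ⟨le_refl b, hbe⟩)
  have hb2 := hs2 (Finset.mem_Icc.mpr ⟨le_refl b, hbe⟩)
  rw [itv_eq_s3 hk1, Finset.mem_Icc] at hb1
  rw [itv_eq_s3 hk2, Finset.mem_Icc] at hb2
  have hcomp := prefix_of_common (x := b) hk1 hk2 hb1.1 hb1.2 hb2.1 hb2.2
  rcases hcomp with h | h
  · by_contra hne
    exact hd1 p2 h hne (by rw [IsNode, hk2]; rfl) hs2
  · by_contra hne
    exact (hd2 p1 h (fun hh => hne hh.symm) (by rw [IsNode, hk1]; rfl) hs1).elim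

lemma stabs_of_crossing {p0 : List Bool} {k : Fin S.n} {jk : Fin S.n × Fin S.n} {b e : ℕ}
    (hk : S.nodeVar p0 = some k) (hr : S.rule k = Sum.inr jk)
    (hsub : Finset.Icc b e ⊆ S.itv p0)
    (hb : b ≤ S.offset p0 + (S.val jk.1).length)
    (he : S.offset p0 + (S.val jk.1).length < e) :
    S.Stabs p0 b e := by
  refine ⟨by rw [IsNode, hk]; rfl, hsub, ?_⟩
  intro p' hpre hne hnode hcon
  obtain ⟨t, rfl⟩ := hpre
  have ht : t ≠ [] := by rintro rfl; simp at hne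
  rw [IsNode, Option.isSome_iff_exists] at hnode
  obtain ⟨k2, hk2⟩ := hnode
  obtain ⟨c, rest, rfl, hsubs⟩ := itv_extension_subset t hk2 ht
  have hchild := nodeVar_child hk hr c
  have hbe : b ≤ e := by omega
  have hbin := hsubs (hcon (Finset.mem_Icc.mpr ⟨le_refl b, hbe⟩))
  have hein := hsubs (hcon (Finset.mem_Icc.mpr ⟨hbe, le_refl e⟩))
  rw [itv_eq_s3 hchild.1, Finset.mem_Icc, hchild.2] at hbin hein
  cases c <;>
      simp only [if_true, if_false, Bool.false_eq_true] at hbin hein <;> omega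

lemma lm_eq_inl {q : ℕ} {i : Fin S.n} {a : α} (h : S.rule i = Sum.inl a) :
    S.lm q i = i := by
  rw [lm]; split <;> simp_all

lemma lm_eq_inr {q : ℕ} {i : Fin S.n} {jk : Fin S.n × Fin S.n} (h : S.rule i = Sum.inr jk) :
    S.lm q i = if (S.val jk.1).length < q then i else S.lm q jk.1 := by
  rw [lm]; split <;> simp_all

/-- the leftmost descent path realizing `lm` -/
def lmPath (S : SLP α) (q : ℕ) (i : Fin S.n) : List Bool :=
  match h : S.rule i with
  | Sum.inl _ => []
  | Sum.inr jk =>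
    have := (S.wf i jk h).1
    if (S.val jk.1).length < q then [] else false :: S.lmPath q jk.1
termination_by i.val

lemma lmPath_eq_inl {q : ℕ} {i : Fin S.n} {a : α} (h : S.rule i = Sum.inl a) :
    S.lmPath q i = [] := by
  rw [lmPath]; split <;> simp_all

lemma lmPath_eq_inr {q : ℕ} {i : Fin S.n} {jk : Fin S.n × Fin S.n} (h : S.rule i = Sum.inr jk) :
    S.lmPath q i = if (S.val jk.1).length < q then [] else false :: S.lmPath q jk.1 := by
  rw [lmPath]; split <;> simp_all

lemma lmPath_descend (q : ℕ) (i : Fin S.n) :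
    S.descend i (S.lmPath q i) = some (S.lm q i) := by
  cases h : S.rule i with
  | inl a => rw [lmPath_eq_inl h, lm_eq_inl h]; rfl
  | inr jk =>
    have := (S.wf i jk h).1
    rw [lmPath_eq_inr h, lm_eq_inr h]
    by_cases hlt : (S.val jk.1).length < q
    · simp [hlt, descend]
    · simp only [hlt, if_false]
      rw [descend_cons_inr h]
      simpa using lmPath_descend q jk.1
termination_by i.val

lemma lmPath_offset (q : ℕ) (i : Fin S.n) : S.offsetFrom i (S.lmPath q i) = 0 := by
  cases h : S.rule i with
  | inl a => rw [lmPath_eq_inl h]; rfl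
  | inr jk =>
    have := (S.wf i jk h).1
    rw [lmPath_eq_inr h]
    by_cases hlt : (S.val jk.1).length < q
    · simp [hlt, offsetFrom]
    · simp only [hlt, if_false]
      rw [offsetFrom_cons_inr h]
      simpa using lmPath_offset q jk.1
termination_by i.val

lemma lm_len {q : ℕ} {i : Fin S.n} (h : q ≤ (S.val i).length) :
    q ≤ (S.val (S.lm q i)).length := by
  cases hr : S.rule i with
  | inl a => rwa [lm_eq_inl hr]
  | inr jk =>
    have := (S.wf i jk hr).1
    rw [lm_eq_inr hr]
    by_cases hlt : (S.val jk.1).length < q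
    · simpa [hlt] using h
    · simp only [hlt, if_false]
      exact lm_len (le_of_not_gt hlt)
termination_by i.val

lemma lm_rule {q : ℕ} (hq : 2 ≤ q) {i : Fin S.n} (h : q ≤ (S.val i).length) :
    ∃ jk : Fin S.n × Fin S.n, S.rule (S.lm q i) = Sum.inr jk ∧ (S.val jk.1).length < q := by
  cases hr : S.rule i with
  | inl a =>
    rw [val_eq_inl hr] at h; simp at h; omega
  | inr jk =>
    have := (S.wf i jk hr).1
    rw [lm_eq_inr hr]
    by_cases hlt : (S.val jk.1).length < q
    · exact ⟨jk, by simp [hlt, hr], by simpa [hlt] using hlt⟩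
    · simp only [hlt, if_false]
      exact lm_rule hq (le_of_not_gt hlt)
termination_by i.val

lemma stabs_lm {q : ℕ} (hq : 2 ≤ q) {p0 : List Bool} {k : Fin S.n}
    (hk : S.nodeVar p0 = some k) (hlen : q ≤ (S.val k).length) :
    S.Stabs (p0 ++ S.lmPath q k) (S.offset p0 + 1) (S.offset p0 + q) ∧
      S.nodeVar (p0 ++ S.lmPath q k) = some (S.lm q k) := by
  have hdes : S.nodeVar (p0 ++ S.lmPath q k) = some (S.lm q k) := by
    unfold nodeVar at *
    rw [descend_append_s3, hk]
    simpa using lmPath_descend q k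
  have hoff : S.offset (p0 ++ S.lmPath q k) = S.offset p0 := by
    unfold offset nodeVar at *
    rw [offsetFrom_append_s3 _ _ hk, lmPath_offset]
    omega
  have hlml := lm_len hlen
  obtain ⟨jk', hr', hlt'⟩ := lm_rule hq hlen
  have h1 := val_length_pos (S := S) jk'.1
  refine ⟨stabs_of_crossing hdes hr' ?_ ?_ ?_, hdes⟩
  · rw [itv_eq_s3 hdes, hoff]
    intro x hx
    simp only [Finset.mem_Icc] at hx ⊢
    omega
  · rw [hoff]; omega
  · rw [hoff]; omega

lemma rightNbr_eq_lm {q : ℕ} (hq : 2 ≤ q) {i j : Fin S.n} {jki : Fin S.n × Fin S.n}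
    (hri : S.rule i = Sum.inr jki) (hlen : q ≤ (S.val jki.2).length)
    (hnbr : S.RightNbr q i j) : j = S.lm q jki.2 := by
  obtain ⟨hne, u, p, p', hu1, hu2, hstab, hvar, hstab', hvar'⟩ := hnbr
  have hsub := hstab.2.1
  have hlenI : (S.val i).length = (S.val jki.1).length + (S.val jki.2).length := by
    rw [val_eq_inr hri]; simp
  have hu_mem := hsub (Finset.mem_Icc.mpr ⟨le_refl u, by omega⟩)
  have he_mem := hsub (Finset.mem_Icc.mpr ⟨by omega, le_refl _⟩)
  rw [itv_eq_s3 hvar, Finset.mem_Icc] at hu_mem he_mem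
  have hchildF := nodeVar_child hvar hri false
  have hchildT := nodeVar_child hvar hri true
  simp only [if_false, if_true, Bool.false_eq_true] at hchildF hchildT
  have hnsubF := hstab.2.2 (p ++ [false]) ⟨[false], rfl⟩ (by simp)
    (by rw [IsNode, hchildF.1]; rfl)
  have hnsubT := hstab.2.2 (p ++ [true]) ⟨[true], rfl⟩ (by simp)
    (by rw [IsNode, hchildT.1]; rfl)
  rw [itv_eq_s3 hchildF.1, Finset.not_subset] at hnsubF
  rw [itv_eq_s3 hchildT.1, Finset.not_subset] at hnsubT
  obtain ⟨x, hx1, hx2⟩ := hnsubF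
  obtain ⟨y, hy1, hy2⟩ := hnsubT
  rw [Finset.mem_Icc] at hx1 hy1
  rw [Finset.mem_Icc, hchildF.2] at hx2
  rw [Finset.mem_Icc, hchildT.2] at hy2
  simp only [add_zero] at hx2
  -- arithmetic facts
  have hL_up : S.offset p + (S.val jki.1).length + 2 ≤ u + q := by omega
  have hL_lo : u ≤ S.offset p + (S.val jki.1).length := by omega
  have hu_eq : u = S.offset p + (S.val jki.1).length := by
    by_contra hne'
    have hlt : u < S.offset p + (S.val jki.1).length := by omega
    have hst : S.Stabs p (u + 1) (u + q) := by
      refine stabs_of_crossing hvar hri ?_ (by omega) (by omega)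
      rw [itv_eq_s3 hvar]
      intro z hz
      simp only [Finset.mem_Icc] at hz ⊢
      omega
    have := stabs_unique (by omega) hst hstab'
    subst this
    rw [hvar] at hvar'
    exact hne (Option.some_injective _ hvar')
  -- the real node
  obtain ⟨hstw, hvw⟩ := stabs_lm hq hchildT.1 hlen
  rw [hchildT.2] at hstw
  rw [← hu_eq] at hstw
  have := stabs_unique (by omega) hstab' hstw
  rw [this, hvw] at hvar'
  exact (Option.some_injective _ hvar'.symm)
end SLP
/-- if `X_j` is a right `q`-gram neighbor of `X_i` and
`|val(X_{r(i)})| ≥ q`, then `j = lm_q(X_{r(i)})`; in particular the right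
`q`-gram neighbor of `X_i` is uniquely determined, and `|val(X_{ℓ(j)})| < q`. -/
theorem stmt3 {α : Type} (q : ℕ) (hq : 2 ≤ q) (S : SLP α)
    (i j : Fin S.n) (jki : Fin S.n × Fin S.n)
    (hri : S.rule i = Sum.inr jki)
    (hnbr : S.RightNbr q i j) (hlen : q ≤ (S.val jki.2).length) :
    j = S.lm q jki.2 ∧ (∀ j', S.RightNbr q i j' → j' = j) ∧
      ∃ jkj : Fin S.n × Fin S.n, S.rule j = Sum.inr jkj ∧ (S.val jkj.1).length < q := by

  have h1 := SLP.rightNbr_eq_lm hq hri hlen hnbr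
  refine ⟨h1, fun j' h' => (SLP.rightNbr_eq_lm hq hri hlen h').trans h1.symm, ?_⟩
  obtain ⟨jkj, hr, hlt⟩ := SLP.lm_rule (S := S) hq hlen
  exact ⟨jkj, by rw [h1]; exact hr, hlt⟩
end
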